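/- arXiv:2108.00740 — 2 statements merged into one kernel-verified Lean document; each statement's English description precedes it below -/
import Mathlib

section
/- Let A be a positive definite real symmetric n×n matrix. Then for every real symmetric n×n matrix B one has tr(AB)^2 ≤ tr(A) · tr(B A^{1/2} B A^{1/2}). (Lemma 3 of the paper, specialized to the positive semidefinite cone.) -/
open Matrix BigOperators

/- `msqrt A` is the positive semidefinite square root of `A` (junk value `0` when `A` is
not positive semidefinite). -/
open Classical in
noncomputable def msqrt {n : ℕ} (A : Matrix (Fin n) (Fin n) ℝ) : Matrix (Fin n) (Fin n) ℝ :=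
  if h : A.PosSemidef then
    (h.1.eigenvectorUnitary : Matrix (Fin n) (Fin n) ℝ) *
      diagonal ((↑) ∘ Real.sqrt ∘ h.1.eigenvalues) *
      (star h.1.eigenvectorUnitary : Matrix (Fin n) (Fin n) ℝ)
  else 0

/- The matrix geometric mean `X # Y = X^{1/2} (X^{-1/2} Y X^{-1/2})^{1/2} X^{1/2}`. -/
noncomputable def gmean {n : ℕ} (X Y : Matrix (Fin n) (Fin n) ℝ) : Matrix (Fin n) (Fin n) ℝ :=
  msqrt X * msqrt (msqrt X⁻¹ * Y * msqrt X⁻¹) * msqrt X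

lemma trace_transpose_mul_eq {n : ℕ} (X Y : Matrix (Fin n) (Fin n) ℝ) :
    Matrix.trace (Xᵀ * Y) = ∑ p : Fin n × Fin n, X p.1 p.2 * Y p.1 p.2 := by
  rw [Matrix.trace, Fintype.sum_prod_type]
  simp only [Matrix.diag_apply, Matrix.mul_apply, Matrix.transpose_apply]
  exact Finset.sum_comm ..


lemma trace_cs {n : ℕ} (X Y : Matrix (Fin n) (Fin n) ℝ) :
    (Matrix.trace (Xᵀ * Y)) ^ 2 ≤ Matrix.trace (Xᵀ * X) * Matrix.trace (Yᵀ * Y) := by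
  rw [trace_transpose_mul_eq, trace_transpose_mul_eq, trace_transpose_mul_eq]
  simpa [sq] using Finset.sum_mul_sq_le_sq_mul_sq Finset.univ
    (fun p : Fin n × Fin n => X p.1 p.2) (fun p => Y p.1 p.2)

noncomputable def Matrix.PosSemidef.sqrt {n : ℕ} {A : Matrix (Fin n) (Fin n) ℝ}
    (h : A.PosSemidef) : Matrix (Fin n) (Fin n) ℝ :=
  (h.1.eigenvectorUnitary : Matrix (Fin n) (Fin n) ℝ) *
    diagonal ((↑) ∘ Real.sqrt ∘ h.1.eigenvalues) *
    (star h.1.eigenvectorUnitary : Matrix (Fin n) (Fin n) ℝ)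

lemma Matrix.PosSemidef.posSemidef_sqrt {n : ℕ} {A : Matrix (Fin n) (Fin n) ℝ}
    (h : A.PosSemidef) : h.sqrt.PosSemidef := by
  unfold Matrix.PosSemidef.sqrt
  have hD : (diagonal ((↑) ∘ Real.sqrt ∘ h.1.eigenvalues) : Matrix (Fin n) (Fin n) ℝ).PosSemidef :=
    posSemidef_diagonal_iff.2 (fun i => by simp [Real.sqrt_nonneg])
  have := hD.mul_mul_conjTranspose_same (h.1.eigenvectorUnitary : Matrix (Fin n) (Fin n) ℝ)
  rwa [← Matrix.star_eq_conjTranspose, ← Unitary.coe_star] at this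

lemma Matrix.PosSemidef.sqrt_mul_self {n : ℕ} {A : Matrix (Fin n) (Fin n) ℝ}
    (h : A.PosSemidef) : h.sqrt * h.sqrt = A := by
  have hU : (star h.1.eigenvectorUnitary : Matrix (Fin n) (Fin n) ℝ) *
      (h.1.eigenvectorUnitary : Matrix (Fin n) (Fin n) ℝ) = 1 :=
    Unitary.coe_star_mul_self _
  conv_rhs => rw [h.1.spectral_theorem, Unitary.conjStarAlgAut_apply]
  unfold Matrix.PosSemidef.sqrt
  set U := (h.1.eigenvectorUnitary : Matrix (Fin n) (Fin n) ℝ)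
  set sU := (star h.1.eigenvectorUnitary : Matrix (Fin n) (Fin n) ℝ)
  set D := (diagonal ((↑) ∘ Real.sqrt ∘ h.1.eigenvalues) : Matrix (Fin n) (Fin n) ℝ)
  have : U * D * sU * (U * D * sU) = U * D * (sU * U) * D * sU := by simp only [mul_assoc]
  rw [this, hU, mul_one]
  have hDD : D * D = diagonal (RCLike.ofReal ∘ h.1.eigenvalues) := by
    simp only [D, diagonal_mul_diagonal]
    congr 1
    ext i
    simp [Real.mul_self_sqrt (h.eigenvalues_nonneg i)]
  rw [mul_assoc U D D, hDD]

theorem stmt3 {n : ℕ} (A : Matrix (Fin n) (Fin n) ℝ) (hA : A.PosDef) :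
    ∀ B : Matrix (Fin n) (Fin n) ℝ, B.IsHermitian →
      (Matrix.trace (A * B)) ^ 2 ≤ Matrix.trace A * Matrix.trace (B * msqrt A * B * msqrt A) := by
  intro B hB
  have hAps := hA.posSemidef
  have hSdef : msqrt A = hAps.sqrt := dif_pos hAps
  set S := hAps.sqrt with hSd
  have hSps : S.PosSemidef := hAps.posSemidef_sqrt
  have hTdef : msqrt S = hSps.sqrt := dif_pos hSps
  set T := hSps.sqrt with hTd
  have hSS : S * S = A := hAps.sqrt_mul_self
  have hTT : T * T = S := hSps.sqrt_mul_self
  have hSh : Sᵀ = S := by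
    have := hSps.isHermitian
    simpa [Matrix.IsHermitian, Matrix.conjTranspose_eq_transpose_of_trivial] using this
  have hTh : Tᵀ = T := by
    have := hSps.posSemidef_sqrt.isHermitian
    simpa [Matrix.IsHermitian, Matrix.conjTranspose_eq_transpose_of_trivial] using this
  have hBh : Bᵀ = B := by
    simpa [Matrix.IsHermitian, Matrix.conjTranspose_eq_transpose_of_trivial] using hB
  have key := trace_cs S (T * B * T)
  have h1 : Matrix.trace (Sᵀ * (T * B * T)) = Matrix.trace (A * B) := by
    rw [hSh, show S * (T * B * T) = (S * T * B) * T by simp [mul_assoc],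
      Matrix.trace_mul_comm, show T * (S * T * B) = (T * S * T) * B by simp [mul_assoc],
      show T * S * T = A by rw [← hSS, ← hTT]; simp [mul_assoc]]
  have h2 : Matrix.trace (Sᵀ * S) = Matrix.trace A := by rw [hSh, hSS]
  have h3 : Matrix.trace ((T * B * T)ᵀ * (T * B * T)) = Matrix.trace (B * S * B * S) := by
    rw [show (T * B * T)ᵀ = Tᵀ * Bᵀ * Tᵀ by simp [Matrix.transpose_mul, mul_assoc],
      hTh, hBh, show T * B * T * (T * B * T) = T * (B * S * B * T) by rw [← hTT]; simp [mul_assoc],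
      Matrix.trace_mul_comm, show B * S * B * T * T = B * S * B * S by rw [← hTT]; simp [mul_assoc]]
  rw [hSdef]
  rw [h1, h2, h3] at key
  exact key
end

section
/- Let A_1, ..., A_m be positive definite real symmetric n×n matrices, let x ∈ ℝ^m be entrywise nonnegative, and let B be a positive definite real symmetric n×n matrix. Set M = Σ_{i=1}^m tr(A_i B) A_i, S = B # M^{-1} = B^{1/2} (B^{-1/2} M^{-1} B^{-1/2})^{1/2} B^{1/2}, and B' = S (Σ_{i=1}^m x_i A_i) S. Then Σ_{i=1}^m (x_i − tr(A_i B'))^2 ≤ Σ_{i=1}^m (x_i − tr(A_i B))^2. (Monotonicity of the squared loss under the SCMU/matrix multiplicative update, specialized to the positive semidefinite cone.) -/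
open Matrix BigOperators

section msqrt_cfc
open scoped MatrixOrder
variable {n : ℕ} {A : Matrix (Fin n) (Fin n) ℝ}

lemma msqrt_eq_cfc_sqrt (h : A.PosSemidef) : msqrt A = CFC.sqrt A := by
  rw [CFC.sqrt_eq_real_sqrt A h.nonneg, cfcₙ_eq_cfc, h.1.cfc_eq, msqrt, dif_pos h]
  simp [IsHermitian.cfc]
  rfl

lemma msqrt_posSemidef' (h : A.PosSemidef) : (msqrt A).PosSemidef := by
  rw [msqrt_eq_cfc_sqrt h]; exact (CFC.sqrt_nonneg A).posSemidef

lemma msqrt_mul_self' (h : A.PosSemidef) : msqrt A * msqrt A = A := by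
  rw [msqrt_eq_cfc_sqrt h]; exact CFC.sqrt_mul_sqrt_self A h.nonneg

lemma psd_eq_of_sq_eq_sq {X Y : Matrix (Fin n) (Fin n) ℝ} (hX : X.PosSemidef) (hY : Y.PosSemidef)
    (h : X ^ 2 = Y ^ 2) : X = Y := by
  rw [← CFC.sqrt_sq X hX.nonneg, ← CFC.sqrt_sq Y hY.nonneg, h]

end msqrt_cfc

section helpers
variable {n : ℕ} {A C X Y : Matrix (Fin n) (Fin n) ℝ}

lemma msqrt_posSemidef (h : A.PosSemidef) : (msqrt A).PosSemidef := by
  exact msqrt_posSemidef' h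

lemma msqrt_mul_self (h : A.PosSemidef) : msqrt A * msqrt A = A := by
  exact msqrt_mul_self' h

lemma psd_transpose_eq (h : A.PosSemidef) : Aᵀ = A := h.isHermitian

lemma msqrt_transpose (h : A.PosSemidef) : (msqrt A)ᵀ = msqrt A :=
  psd_transpose_eq (msqrt_posSemidef h)

lemma msqrt_isUnit (h : A.PosDef) : IsUnit (msqrt A).det := by
  have h2 : (msqrt A).det * (msqrt A).det = A.det := by
    rw [← det_mul, msqrt_mul_self h.posSemidef]
  have := h.det_pos
  refine isUnit_iff_ne_zero.2 fun h0 => ?_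
  rw [h0, mul_zero] at h2; linarith [h2 ▸ this]

lemma posDef_conj (hA : A.PosDef) (hC : IsUnit C.det) : (Cᵀ * A * C).PosDef := by
  have hherm : (Cᵀ * A * C).IsHermitian := by
    have := isHermitian_conjTranspose_mul_mul C hA.isHermitian
    simpa using this
  refine PosDef.of_dotProduct_mulVec_pos hherm fun x hx => ?_
  have hCx : C *ᵥ x ≠ 0 :=
    fun h0 => hx (Matrix.mulVec_injective_iff_isUnit.2 ((Matrix.isUnit_iff_isUnit_det C).2 hC)
      (by simpa using h0))
  have := hA.dotProduct_mulVec_pos hCx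
  simpa only [star_trivial, ← mulVec_mulVec, dotProduct_mulVec, vecMul_transpose] using this

lemma posDef_of_psd_isUnit (h : A.PosSemidef) (hu : IsUnit A.det) : A.PosDef := by
  refine PosDef.of_dotProduct_mulVec_pos h.isHermitian fun x hx => ?_
  have hmv : msqrt A *ᵥ x = x ᵥ* msqrt A := by
    conv_lhs => rw [← msqrt_transpose h]
    rw [mulVec_transpose]
  have key : star x ⬝ᵥ (A *ᵥ x) = (msqrt A *ᵥ x) ⬝ᵥ (msqrt A *ᵥ x) := by
    conv_lhs => rw [← msqrt_mul_self h]
    rw [star_trivial, ← mulVec_mulVec, dotProduct_mulVec, ← hmv]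
  have hQx : msqrt A *ᵥ x ≠ 0 := by
    intro h0
    have hAx : A *ᵥ x = 0 := by
      rw [← msqrt_mul_self h, ← mulVec_mulVec, h0, mulVec_zero]
    exact hx (Matrix.mulVec_injective_iff_isUnit.2 ((Matrix.isUnit_iff_isUnit_det _).2 hu)
      (by rw [hAx, mulVec_zero]))
  rw [key]
  have h0 : 0 ≤ (msqrt A *ᵥ x) ⬝ᵥ (msqrt A *ᵥ x) :=
    Finset.sum_nonneg fun i _ => mul_self_nonneg _
  exact h0.lt_of_ne fun h1 => hQx (dotProduct_self_eq_zero.mp h1.symm)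

lemma msqrt_posDef (h : A.PosDef) : (msqrt A).PosDef :=
  posDef_of_psd_isUnit (msqrt_posSemidef h.posSemidef) (msqrt_isUnit h)

lemma trace_pos_of_posDef (h : A.PosDef) (hn : 0 < n) : 0 < A.trace := by
  rw [Matrix.trace]
  refine Finset.sum_pos (fun i _ => ?_)
    (by have : Nonempty (Fin n) := Fin.pos_iff_nonempty.mp hn; exact Finset.univ_nonempty)
  have := h.dotProduct_mulVec_pos (x := Pi.single i 1) (by
    intro h0
    have h1 : (1:ℝ) = 0 := by simpa using congr_fun h0 i
    exact one_ne_zero h1)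
  simpa [dotProduct, mulVec, Pi.single_apply, Finset.sum_ite_eq, Matrix.diag] using this

lemma trace_nonneg_of_psd (h : A.PosSemidef) : 0 ≤ A.trace := by
  rw [Matrix.trace]
  refine Finset.sum_nonneg (fun i _ => ?_)
  have := h.dotProduct_mulVec_nonneg (Pi.single i 1)
  simpa [dotProduct, mulVec, Pi.single_apply, Finset.sum_ite_eq, Matrix.diag] using this

lemma trace_mul_nonneg (hX : X.PosSemidef) (hY : Y.PosSemidef) : 0 ≤ (X * Y).trace := by
  have h1 : X * Y = X * msqrt Y * msqrt Y := by
    rw [Matrix.mul_assoc, msqrt_mul_self hY]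
  rw [h1, Matrix.trace_mul_comm]
  have : (msqrt Y * (X * msqrt Y)).PosSemidef := by
    have := hX.conjTranspose_mul_mul_same (msqrt Y)
    simpa [msqrt_transpose hY, Matrix.mul_assoc] using this
  exact trace_nonneg_of_psd this

lemma trace_mul_pos (hX : X.PosDef) (hY : Y.PosDef) (hn : 0 < n) : 0 < (X * Y).trace := by
  have h1 : X * Y = X * msqrt Y * msqrt Y := by
    rw [Matrix.mul_assoc, msqrt_mul_self hY.posSemidef]
  rw [h1, Matrix.trace_mul_comm]
  have h2 : (msqrt Y * (X * msqrt Y)).PosDef := by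
    have := posDef_conj hX (msqrt_isUnit hY)
    simpa [msqrt_transpose hY.posSemidef, Matrix.mul_assoc] using this
  exact trace_pos_of_posDef h2 hn

lemma trace_sq_nonneg (C : Matrix (Fin n) (Fin n) ℝ) (hC : Cᵀ = C) :
    0 ≤ Matrix.trace (C * C) := by
  have hck : ∀ i k, C k i = C i k := fun i k =>
    (Matrix.transpose_apply C i k).symm.trans (congrFun (congrFun hC i) k)
  have h1 : Matrix.trace (C * C) = ∑ i, ∑ k, C i k * C i k := by
    rw [Matrix.trace]
    refine Finset.sum_congr rfl fun i _ => ?_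
    rw [Matrix.diag_apply, Matrix.mul_apply]
    exact Finset.sum_congr rfl fun k _ => by rw [hck i k]
  rw [h1]
  exact Finset.sum_nonneg fun i _ => Finset.sum_nonneg fun k _ => mul_self_nonneg _

lemma gmean_key {B M : Matrix (Fin n) (Fin n) ℝ} (hB : B.PosDef) (hM : M.PosDef) :
    (gmean B M⁻¹).PosDef ∧ (gmean B M⁻¹) * M * (gmean B M⁻¹) = B := by
  set Q := msqrt B with hQdef
  have hQpd : Q.PosDef := msqrt_posDef hB
  have hQu : IsUnit Q.det := msqrt_isUnit hB
  have hMu : IsUnit M.det := isUnit_iff_ne_zero.2 hM.det_pos.ne'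
  have hQQ : Q * Q = B := msqrt_mul_self hB.posSemidef
  have hQt : Qᵀ = Q := msqrt_transpose hB.posSemidef
  have hR : msqrt B⁻¹ = Q⁻¹ := by
    have h1 : (msqrt B⁻¹) ^ 2 = B⁻¹ := by rw [pow_two]; exact msqrt_mul_self hB.inv.posSemidef
    have h2 : (Q⁻¹) ^ 2 = B⁻¹ := by rw [pow_two, ← Matrix.mul_inv_rev, hQQ]
    exact psd_eq_of_sq_eq_sq (msqrt_posSemidef hB.inv.posSemidef) hQpd.posSemidef.inv
      (h1.trans h2.symm)
  have hQit : (Q⁻¹)ᵀ = Q⁻¹ := by rw [Matrix.transpose_nonsing_inv, hQt]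
  have hQiu : IsUnit (Q⁻¹).det := Q.isUnit_nonsing_inv_det hQu
  have hconj : (Q⁻¹ * M⁻¹ * Q⁻¹).PosDef := by
    have := posDef_conj hM.inv hQiu
    rwa [hQit] at this
  set T := msqrt (Q⁻¹ * M⁻¹ * Q⁻¹) with hTdef
  have hTpd : T.PosDef := msqrt_posDef hconj
  have hTu : IsUnit T.det := isUnit_iff_ne_zero.2 hTpd.det_pos.ne'
  have hTT : T * T = Q⁻¹ * M⁻¹ * Q⁻¹ := msqrt_mul_self hconj.posSemidef
  have hSdef : gmean B M⁻¹ = Q * T * Q := by rw [gmean, hR]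
  have hN : Q * M * Q = T⁻¹ * T⁻¹ := by
    have h5 : (T * T)⁻¹ = Q * M * Q := by
      rw [hTT, Matrix.mul_inv_rev, Matrix.mul_inv_rev,
        Matrix.nonsing_inv_nonsing_inv Q hQu, Matrix.nonsing_inv_nonsing_inv M hMu,
        Matrix.mul_assoc]
    rw [← h5, Matrix.mul_inv_rev]
  constructor
  · rw [hSdef]
    have := posDef_conj hTpd hQu
    rwa [hQt] at this
  · have key : T * (Q * M * Q) * T = 1 := by
      rw [hN]
      have h6 : T * (T⁻¹ * T⁻¹) * T = (T * T⁻¹) * (T⁻¹ * T) := by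
        simp only [Matrix.mul_assoc]
      rw [h6, Matrix.mul_nonsing_inv T hTu, Matrix.nonsing_inv_mul T hTu, one_mul]
    have h7 : gmean B M⁻¹ * M * gmean B M⁻¹ = Q * (T * (Q * M * Q) * T) * Q := by
      rw [hSdef]; simp only [Matrix.mul_assoc]
    rw [h7, key, Matrix.mul_one, hQQ]

end helpers
lemma core {m : ℕ} (p : Fin m → Fin m → ℝ) (c w : Fin m → ℝ)
    (hsym : ∀ i j, p i j = p j i)
    (hpos : ∀ i j, 0 ≤ p i j)
    (hc : ∀ i, 0 < c i)
    (hfix : ∀ i, ∑ j, p i j * c j = c i)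
    (hgram : ∀ v : Fin m → ℝ, 0 ≤ ∑ i, ∑ j, v i * (p i j * v j)) :
    ∑ i, (w i - ∑ j, p i j * w j) ^ 2 ≤ ∑ i, (w i) ^ 2 := by
  set u : Fin m → ℝ := fun i => ∑ j, p i j * w j with hu
  -- the ⟨v, Pv⟩ ≤ ‖v‖² inequality
  have hX : ∀ v : Fin m → ℝ, ∀ i, ∑ j, p i j * ((v i)^2 * (c j / c i)) = (v i)^2 := by
    intro v i
    have h1 : ∀ j, p i j * ((v i)^2 * (c j / c i)) = ((v i)^2 / c i) * (p i j * c j) := by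
      intro j; field_simp
    rw [Finset.sum_congr rfl (fun j _ => h1 j), ← Finset.mul_sum, hfix i]
    rw [div_mul_eq_mul_div, mul_div_assoc, div_self (hc i).ne', mul_one]
  have hb : ∀ v : Fin m → ℝ, (∑ i, ∑ j, v i * (p i j * v j)) ≤ ∑ i, (v i)^2 := by
    intro v
    have step : ∑ i, ∑ j, v i * (p i j * v j) ≤
        ∑ i, ∑ j, (p i j * ((v i)^2 * (c j / c i)) + p i j * ((v j)^2 * (c i / c j))) / 2 := by
      refine Finset.sum_le_sum fun i _ => Finset.sum_le_sum fun j _ => ?_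
      have hci := hc i; have hcj := hc j
      have base : v i * v j ≤ ((v i)^2 * (c j / c i) + (v j)^2 * (c i / c j)) / 2 := by
        have h1 : (0:ℝ) < 2 * (c i * c j) := by positivity
        rw [le_div_iff₀ (by norm_num : (0:ℝ) < 2)]
        have h2 : (v i)^2 * (c j / c i) + (v j)^2 * (c i / c j)
            = ((v i)^2 * c j^2 + (v j)^2 * c i^2) / (c i * c j) := by
          field_simp
        rw [h2, le_div_iff₀ (by positivity : (0:ℝ) < c i * c j)]
        nlinarith [sq_nonneg (v i * c j - v j * c i)]
      calc v i * (p i j * v j) = p i j * (v i * v j) := by ring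
        _ ≤ p i j * (((v i)^2 * (c j / c i) + (v j)^2 * (c i / c j)) / 2) :=
            mul_le_mul_of_nonneg_left base (hpos i j)
        _ = (p i j * ((v i)^2 * (c j / c i)) + p i j * ((v j)^2 * (c i / c j))) / 2 := by ring
    have hYX : ∑ i, ∑ j, p i j * ((v j)^2 * (c i / c j))
        = ∑ i, ∑ j, p i j * ((v i)^2 * (c j / c i)) := by
      rw [Finset.sum_comm]
      exact Finset.sum_congr rfl fun i _ => Finset.sum_congr rfl fun j _ => by rw [hsym j i]
    calc ∑ i, ∑ j, v i * (p i j * v j)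
        ≤ ∑ i, ∑ j, (p i j * ((v i)^2 * (c j / c i)) + p i j * ((v j)^2 * (c i / c j))) / 2 := step
      _ = (∑ i, ∑ j, p i j * ((v i)^2 * (c j / c i))
            + ∑ i, ∑ j, p i j * ((v j)^2 * (c i / c j))) / 2 := by
          simp only [← Finset.sum_add_distrib, ← Finset.sum_div]
      _ = ∑ i, (v i)^2 := by
          rw [hYX]
          rw [Finset.sum_congr rfl fun i (_ : i ∈ Finset.univ) => hX v i]
          ring
  -- key sums
  have hA1 : ∑ i, ∑ j, w i * (p i j * u j) = ∑ j, u j * u j := by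
    rw [Finset.sum_comm]
    refine Finset.sum_congr rfl fun j _ => ?_
    have : ∑ i, w i * (p i j * u j) = (∑ i, p j i * w i) * u j := by
      rw [Finset.sum_mul]
      exact Finset.sum_congr rfl fun i _ => by rw [hsym j i]; ring
    rw [this]
  have hA2 : ∑ i, ∑ j, u i * (p i j * w j) = ∑ i, u i * u i := by
    refine Finset.sum_congr rfl fun i _ => ?_
    rw [← Finset.mul_sum]
  have hgram2 := hgram (fun i => w i - u i)
  have e2 : ∑ i, ∑ j, (w i - u i) * (p i j * (w j - u j))
      = (∑ i, ∑ j, w i * (p i j * w j)) - (∑ i, ∑ j, w i * (p i j * u j))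
        - (∑ i, ∑ j, u i * (p i j * w j)) + ∑ i, ∑ j, u i * (p i j * u j) := by
    simp only [← Finset.sum_add_distrib, ← Finset.sum_sub_distrib]
    refine Finset.sum_congr rfl fun i _ => Finset.sum_congr rfl fun j _ => by ring
  have hww : ∑ i, ∑ j, w i * (p i j * w j) = ∑ i, w i * u i := by
    refine Finset.sum_congr rfl fun i _ => ?_
    rw [← Finset.mul_sum]
  have ha : 0 ≤ ∑ i, w i * u i := by rw [← hww]; exact hgram w
  have huu : ∑ i, u i * u i ≤ ∑ i, w i * u i := by
    have h3 := hb u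
    have h4 : ∑ i, u i * u i = ∑ i, (u i)^2 := by
      refine Finset.sum_congr rfl fun i _ => by ring
    rw [e2, hww, hA1, hA2] at hgram2
    linarith [h4 ▸ h3]
  have expand : ∑ i, (w i - u i)^2
      = ∑ i, (w i)^2 - 2*(∑ i, w i * u i) + ∑ i, u i * u i := by
    rw [Finset.mul_sum, ← Finset.sum_sub_distrib, ← Finset.sum_add_distrib]
    refine Finset.sum_congr rfl fun i _ => by ring
  calc ∑ i, (w i - u i)^2
      = ∑ i, (w i)^2 - 2*(∑ i, w i * u i) + ∑ i, u i * u i := expand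
    _ ≤ ∑ i, (w i)^2 := by linarith

theorem stmt11 {n m : ℕ} (A : Fin m → Matrix (Fin n) (Fin n) ℝ)
    (hA : ∀ i, (A i).PosDef)
    (x : Fin m → ℝ) (hx : ∀ i, 0 ≤ x i)
    (B : Matrix (Fin n) (Fin n) ℝ) (hB : B.PosDef)
    (M S B' : Matrix (Fin n) (Fin n) ℝ)
    (hM : M = ∑ i, (Matrix.trace (A i * B)) • A i)
    (hS : S = gmean B M⁻¹)
    (hB' : B' = S * (∑ i, x i • A i) * S) :
    ∑ i, (x i - Matrix.trace (A i * B')) ^ 2 ≤ ∑ i, (x i - Matrix.trace (A i * B)) ^ 2 := by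
  by_cases hn0 : n = 0
  · subst hn0
    have htr : ∀ (X : Matrix (Fin 0) (Fin 0) ℝ), Matrix.trace X = 0 := fun X => by
      simp [Matrix.trace]
    simp only [htr]
    exact le_rfl
  · by_cases hm0 : m = 0
    · subst hm0; simp
    have hn : 0 < n := Nat.pos_of_ne_zero hn0
    have hnne : Nonempty (Fin n) := Fin.pos_iff_nonempty.mp hn
    have hmne : Nonempty (Fin m) := Fin.pos_iff_nonempty.mp (Nat.pos_of_ne_zero hm0)
    have hApsd : ∀ i, (A i).PosSemidef := fun i => (hA i).posSemidef
    have hAt : ∀ i, (A i)ᵀ = A i := fun i => psd_transpose_eq (hApsd i)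
    -- M is positive definite
    have hMpd : M.PosDef := by
      rw [hM]
      refine PosDef.of_dotProduct_mulVec_pos ?_ ?_
      · show (∑ i, Matrix.trace (A i * B) • A i)ᴴ = _
        rw [Matrix.conjTranspose_sum]
        exact Finset.sum_congr rfl fun i _ => by
          rw [Matrix.conjTranspose_smul, (hA i).1, star_trivial]
      · intro v hv
        have hmv : (∑ i, Matrix.trace (A i * B) • A i) *ᵥ v
            = ∑ i, Matrix.trace (A i * B) • (A i *ᵥ v) := by
          have h1 := map_sum (AddMonoidHom.mk' (fun (X : Matrix (Fin n) (Fin n) ℝ) => X *ᵥ v)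
            (fun X Y => Matrix.add_mulVec X Y v))
            (fun i => Matrix.trace (A i * B) • A i) Finset.univ
          simp only [AddMonoidHom.mk'_apply] at h1
          rw [h1]
          exact Finset.sum_congr rfl fun i _ => Matrix.smul_mulVec _ _ _
        rw [star_trivial, hmv]
        have hdp : v ⬝ᵥ (∑ i, Matrix.trace (A i * B) • (A i *ᵥ v))
            = ∑ i, Matrix.trace (A i * B) * (v ⬝ᵥ (A i *ᵥ v)) := by
          have h2 := map_sum (AddMonoidHom.mk' (fun (w : Fin n → ℝ) => v ⬝ᵥ w)
            (fun w z => dotProduct_add v w z))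
            (fun i => Matrix.trace (A i * B) • (A i *ᵥ v)) Finset.univ
          simp only [AddMonoidHom.mk'_apply] at h2
          rw [h2]
          exact Finset.sum_congr rfl fun i _ => by
            rw [dotProduct_smul, smul_eq_mul]
        rw [hdp]
        refine Finset.sum_pos (fun i _ => ?_) Finset.univ_nonempty
        have h3 := (hA i).dotProduct_mulVec_pos hv
        rw [star_trivial] at h3
        exact mul_pos (trace_mul_pos (hA i) hB hn) h3
    -- geometric mean facts
    obtain ⟨hSpd, hSMS⟩ : S.PosDef ∧ S * M * S = B := by
      rw [hS]; exact gmean_key hB hMpd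
    set W := msqrt S with hWdef
    have hWW : W * W = S := msqrt_mul_self hSpd.posSemidef
    have hWt : Wᵀ = W := msqrt_transpose hSpd.posSemidef
    -- properties of the kernel p i j = tr(A i (S A j S))
    have hsym : ∀ i j, Matrix.trace (A i * (S * A j * S)) = Matrix.trace (A j * (S * A i * S)) := by
      intro i j
      calc Matrix.trace (A i * (S * A j * S)) = Matrix.trace ((A i * S) * (A j * S)) := by
            rw [show A i * (S * A j * S) = (A i * S) * (A j * S) from by
              simp only [Matrix.mul_assoc]]
        _ = Matrix.trace ((A j * S) * (A i * S)) := Matrix.trace_mul_comm _ _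
        _ = Matrix.trace (A j * (S * A i * S)) := by
            rw [show (A j * S) * (A i * S) = A j * (S * A i * S) from by
              simp only [Matrix.mul_assoc]]
    have hWAW : ∀ k, (W * A k * W).PosSemidef := fun k => by
      have := (hApsd k).conjTranspose_mul_mul_same W
      rwa [Matrix.conjTranspose_eq_transpose_of_trivial, hWt] at this
    have hpos : ∀ i j, 0 ≤ Matrix.trace (A i * (S * A j * S)) := by
      intro i j
      have h1 : Matrix.trace (A i * (S * A j * S)) = Matrix.trace ((W * A j * W) * (W * A i * W)) := by
        calc Matrix.trace (A i * (S * A j * S))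
            = Matrix.trace ((A i * W) * (W * A j * W * W)) := by
              rw [show A i * (S * A j * S) = (A i * W) * (W * A j * W * W) from by
                rw [← hWW]; simp only [Matrix.mul_assoc]]
          _ = Matrix.trace ((W * A j * W * W) * (A i * W)) := Matrix.trace_mul_comm _ _
          _ = Matrix.trace ((W * A j * W) * (W * A i * W)) := by
              rw [show (W * A j * W * W) * (A i * W) = (W * A j * W) * (W * A i * W) from by
                simp only [Matrix.mul_assoc]]
      rw [h1]
      exact trace_mul_nonneg (hWAW j) (hWAW i)
    -- linearity of traces against p
    have trace_lin : ∀ (y : Fin m → ℝ) i,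
        Matrix.trace (A i * (S * (∑ j, y j • A j) * S))
          = ∑ j, Matrix.trace (A i * (S * A j * S)) * y j := by
      intro y i
      simp only [Finset.mul_sum, Finset.sum_mul, Matrix.mul_smul, Matrix.smul_mul,
        Matrix.trace_sum, Matrix.trace_smul, smul_eq_mul]
      exact Finset.sum_congr rfl fun j _ => by ring
    have hcpos : ∀ i, 0 < Matrix.trace (A i * B) := fun i => trace_mul_pos (hA i) hB hn
    have hfix : ∀ i, ∑ j, Matrix.trace (A i * (S * A j * S)) * Matrix.trace (A j * B)
        = Matrix.trace (A i * B) := by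
      intro i
      rw [← trace_lin (fun j => Matrix.trace (A j * B)) i, ← hM, hSMS]
    -- Gram positivity
    have hgram : ∀ v : Fin m → ℝ,
        0 ≤ ∑ i, ∑ j, v i * (Matrix.trace (A i * (S * A j * S)) * v j) := by
      intro v
      have hq : Matrix.trace ((∑ j, v j • A j) * S * (∑ j, v j • A j) * S)
          = ∑ i, ∑ j, v i * (Matrix.trace (A i * (S * A j * S)) * v j) := by
        simp only [Finset.mul_sum, Finset.sum_mul, Matrix.mul_smul, Matrix.smul_mul,
          Matrix.trace_sum, Matrix.trace_smul, smul_eq_mul]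
        refine Finset.sum_congr rfl fun i _ => Finset.sum_congr rfl fun j _ => ?_
        rw [show A j * S * A i * S = A j * (S * A i * S) from by simp only [Matrix.mul_assoc],
          hsym j i]
        ring
      rw [← hq]
      set X := ∑ j, v j • A j with hXdef
      have hXt : Xᵀ = X := by
        rw [hXdef, Matrix.transpose_sum]
        exact Finset.sum_congr rfl fun j _ => by rw [Matrix.transpose_smul, hAt j]
      have hCt : (W * X * W)ᵀ = W * X * W := by
        rw [Matrix.transpose_mul, Matrix.transpose_mul, hWt, hXt]
        simp only [Matrix.mul_assoc]
      have h2 : X * S * X * S = (X * S * X * W) * W := by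
        rw [show X * S * X * S = X * S * X * (W * W) from by rw [hWW]]
        simp only [Matrix.mul_assoc]
      have h3 : W * (X * S * X * W) = (W * X * W) * (W * X * W) := by
        rw [show X * S = X * (W * W) from by rw [hWW]]
        simp only [Matrix.mul_assoc]
      calc (0:ℝ) ≤ Matrix.trace ((W * X * W) * (W * X * W)) := trace_sq_nonneg _ hCt
        _ = Matrix.trace (W * (X * S * X * W)) := by rw [h3]
        _ = Matrix.trace ((X * S * X * W) * W) := Matrix.trace_mul_comm _ _
        _ = Matrix.trace (X * S * X * S) := by rw [← h2]
    -- apply the core inequality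
    have key := core (fun i j => Matrix.trace (A i * (S * A j * S)))
      (fun i => Matrix.trace (A i * B)) (fun i => x i - Matrix.trace (A i * B))
      hsym hpos hcpos hfix hgram
    have hBtr : ∀ i, Matrix.trace (A i * B')
        = ∑ j, Matrix.trace (A i * (S * A j * S)) * x j := by
      intro i
      rw [hB']
      exact trace_lin x i
    have hshift : ∀ i, x i - Matrix.trace (A i * B')
        = (x i - Matrix.trace (A i * B))
          - ∑ j, Matrix.trace (A i * (S * A j * S)) * (x j - Matrix.trace (A j * B)) := by
      intro i
      rw [hBtr i]
      have h4 : ∑ j, Matrix.trace (A i * (S * A j * S)) * (x j - Matrix.trace (A j * B))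
          = (∑ j, Matrix.trace (A i * (S * A j * S)) * x j) - Matrix.trace (A i * B) := by
        rw [← hfix i, ← Finset.sum_sub_distrib]
        exact Finset.sum_congr rfl fun j _ => by ring
      rw [h4]; ring
    calc ∑ i, (x i - Matrix.trace (A i * B')) ^ 2
        = ∑ i, ((x i - Matrix.trace (A i * B))
            - ∑ j, Matrix.trace (A i * (S * A j * S)) * (x j - Matrix.trace (A j * B))) ^ 2 := by
          exact Finset.sum_congr rfl fun i _ => by rw [hshift i]
      _ ≤ ∑ i, (x i - Matrix.trace (A i * B)) ^ 2 := key
end
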